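/- Let Ω ⊂ ℝ² be the open triangle with vertices A(−2, 1/3), B(0, 1/3), C(0, 1). Define α(x,y) = ((x y² + y − 1/9)/3)^{1/3} + 1/3 (real cube root) and z(x,y) = 1 − e^{1/α(x,y) − 1/y}. Then for every (x,y) ∈ Ω one has x y² + y − 1/9 > 0 and |∂z/∂x(x,y)| ≥ (1/(81 e²)) · ((x y² + y − 1/9)/3)^{−2/3}. -/
import Mathlib


open MeasureTheory Set Real

/-- The real (odd) cube root. -/
noncomputable def cbrt (t : ℝ) : ℝ :=
  if 0 ≤ t then t ^ ((1:ℝ)/3) else -((-t) ^ ((1:ℝ)/3))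

/-- The open triangle with vertices A(−2,1/3), B(0,1/3), C(0,1):
its sides lie on the lines y = 1/3, x = 0 and y = x/3 + 1. -/
def TriangleEx4 : Set (ℝ × ℝ) :=
  {p : ℝ × ℝ | 1/3 < p.2 ∧ p.1 < 0 ∧ p.2 < p.1 / 3 + 1}

/-- α(x,y) = ((x y² + y − 1/9)/3)^{1/3} + 1/3. -/
noncomputable def alphaEx4 : ℝ × ℝ → ℝ := fun p =>
  cbrt ((p.1 * p.2 ^ 2 + p.2 - 1/9) / 3) + 1/3

/-- The explicit solution z(x,y) = 1 − e^{1/α(x,y) − 1/y} of Example 4. -/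
noncomputable def zEx4 : ℝ × ℝ → ℝ := fun p =>
  1 - Real.exp (1 / alphaEx4 p - 1 / p.2)

/-- Partial derivative ∂z/∂x. -/
noncomputable def zEx4x (p : ℝ × ℝ) : ℝ := deriv (fun t => zEx4 (t, p.2)) p.1

lemma cube_rpow_third {a : ℝ} (ha : 0 ≤ a) : (a ^ 3) ^ ((1:ℝ)/3) = a := by
  rw [← Real.rpow_natCast a 3, ← Real.rpow_mul ha]
  norm_num

set_option maxHeartbeats 1000000 in
theorem stmt_5 :
    ∀ p ∈ TriangleEx4,
      0 < p.1 * p.2 ^ 2 + p.2 - 1/9 ∧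
      1 / (81 * Real.exp 2) *
        ((p.1 * p.2 ^ 2 + p.2 - 1/9) / 3) ^ (-(2:ℝ)/3) ≤ |zEx4x p| := by
  rintro ⟨x, y⟩ ⟨hy, hx, hxy⟩
  dsimp only at hy hx hxy ⊢
  set u : ℝ := (x * y ^ 2 + y - 1/9) / 3 with hu_def
  have hy1 : y < 1 := by linarith
  have hcube : (y - 1/3) ^ 3 < u := by
    have h1 : 3 * (y - 1) < x := by linarith
    have h2 : (0:ℝ) < y ^ 2 := by positivity
    nlinarith [mul_pos (sub_pos.2 h1) h2]
  have hu0 : 0 < u := lt_trans (pow_pos (by linarith) 3) hcube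
  have hnum : 0 < x * y ^ 2 + y - 1/9 := by
    have : u = (x * y ^ 2 + y - 1/9) / 3 := hu_def
    linarith [hu0]
  refine ⟨hnum, ?_⟩
  -- bounds on α
  have hu8 : u < (2/3 : ℝ) ^ 3 := by
    have h2 : (0:ℝ) < y ^ 2 := by positivity
    nlinarith [mul_neg_of_neg_of_pos hx h2]
  set α : ℝ := u ^ ((1:ℝ)/3) + 1/3 with hα_def
  have hcb_lo : y - 1/3 < u ^ ((1:ℝ)/3) := by
    have := Real.rpow_lt_rpow (pow_nonneg (by linarith) 3) hcube (by norm_num : (0:ℝ) < 1/3)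
    rwa [cube_rpow_third (by linarith : (0:ℝ) ≤ y - 1/3)] at this
  have hcb_hi : u ^ ((1:ℝ)/3) < 2/3 := by
    have := Real.rpow_lt_rpow hu0.le hu8 (by norm_num : (0:ℝ) < 1/3)
    rwa [cube_rpow_third (by norm_num : (0:ℝ) ≤ 2/3)] at this
  have hα_lo : y < α := by simp only [hα_def]; linarith
  have hα_hi : α < 1 := by simp only [hα_def]; linarith
  have hα0 : 0 < α := by linarith
  -- the derivative
  have hg : HasDerivAt (fun t : ℝ => (t * y ^ 2 + y - 1/9) / 3) (y ^ 2 / 3) x := by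
    have h1 : HasDerivAt (fun t : ℝ => t * y ^ 2 + y - 1/9) (y ^ 2) x := by
      simpa using (((hasDerivAt_id x).mul_const (y ^ 2)).add_const y).sub_const (1/9)
    simpa using h1.div_const 3
  have hαd : HasDerivAt (fun t : ℝ => ((t * y ^ 2 + y - 1/9) / 3) ^ ((1:ℝ)/3) + 1/3)
      (y ^ 2 / 3 * ((1:ℝ)/3) * u ^ ((1:ℝ)/3 - 1)) x :=
    (hg.rpow_const (Or.inl hu0.ne')).add_const (1/3)
  set A : ℝ := y ^ 2 / 3 * ((1:ℝ)/3) * u ^ ((1:ℝ)/3 - 1) with hA_def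
  have hinv : HasDerivAt
      (fun t : ℝ => 1 / (((t * y ^ 2 + y - 1/9) / 3) ^ ((1:ℝ)/3) + 1/3) - 1 / y)
      (-A / α ^ 2) x := by
    have h0 := (hαd.inv hα0.ne').sub_const (1 / y)
    rw [show ((x * y ^ 2 + y - 1/9) / 3) ^ ((1:ℝ)/3) + 1/3 = α by
      rw [hα_def, hu_def]] at h0
    simpa [one_div] using h0
  have hF : HasDerivAt
      (fun t : ℝ => 1 - Real.exp
        (1 / (((t * y ^ 2 + y - 1/9) / 3) ^ ((1:ℝ)/3) + 1/3) - 1 / y))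
      (-(Real.exp (1 / α - 1 / y) * (-A / α ^ 2))) x := by
    have := hinv.exp.const_sub 1
    convert this using 2
  have heq : (fun t : ℝ => zEx4 (t, y)) =ᶠ[nhds x]
      (fun t : ℝ => 1 - Real.exp
        (1 / (((t * y ^ 2 + y - 1/9) / 3) ^ ((1:ℝ)/3) + 1/3) - 1 / y)) := by
    have hmem : {t : ℝ | (t * y ^ 2 + y - 1/9) / 3 ∈ Ioi (0:ℝ)} ∈ nhds x :=
      hg.continuousAt.preimage_mem_nhds (Ioi_mem_nhds hu0)
    filter_upwards [hmem] with t ht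
    simp only [zEx4, alphaEx4, cbrt]
    rw [if_pos (le_of_lt ht)]
  have hz : HasDerivAt (fun t : ℝ => zEx4 (t, y))
      (-(Real.exp (1 / α - 1 / y) * (-A / α ^ 2))) x :=
    hF.congr_of_eventuallyEq heq
  have hderiv : zEx4x (x, y) = Real.exp (1 / α - 1 / y) * (A / α ^ 2) := by
    have := hz.deriv
    simp only [zEx4x] at *
    rw [this]; ring
  -- positivity of A
  have hw0 : (0:ℝ) < u ^ ((1:ℝ)/3 - 1) := Real.rpow_pos_of_pos hu0 _
  have hA0 : 0 < A := by
    have : (0:ℝ) < y ^ 2 := by positivity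
    positivity
  have hzx_pos : 0 < Real.exp (1 / α - 1 / y) * (A / α ^ 2) := by positivity
  rw [hderiv, abs_of_pos hzx_pos]
  -- exponent bound
  have hexp : Real.exp (-2) ≤ Real.exp (1 / α - 1 / y) := by
    apply Real.exp_le_exp.2
    have h1 : 1 ≤ 1 / α := by rw [le_div_iff₀ hα0]; linarith
    have h2 : 1 / y < 3 := by rw [div_lt_iff₀ (by linarith : (0:ℝ) < y)]; linarith
    linarith
  have hexp' : Real.exp (-2) = (Real.exp 2)⁻¹ := by
    rw [Real.exp_neg]
  -- exponent equality in target
  have hpow_eq : ((x * y ^ 2 + y - 1/9) / 3) ^ (-(2:ℝ)/3) = u ^ ((1:ℝ)/3 - 1) := by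
    rw [← hu_def]; norm_num
  rw [hpow_eq]
  set w : ℝ := u ^ ((1:ℝ)/3 - 1)
  have hy2 : (1:ℝ)/9 < y ^ 2 := by nlinarith
  have hα2 : α ^ 2 ≤ 1 := by nlinarith
  have hα2' : (0:ℝ) < α ^ 2 := by positivity
  have hE0 : (0:ℝ) < Real.exp 2 := Real.exp_pos 2
  have hAw : w / 81 < A := by
    rw [hA_def]
    have h := mul_lt_mul_of_pos_right hy2 hw0
    linarith only [h]
  have key : 1 / (81 * Real.exp 2) * w ≤ Real.exp (-2) * (A / α ^ 2) := by
    have hAα : A ≤ A / α ^ 2 := by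
      rw [le_div_iff₀ hα2']; nlinarith
    have h1 : w / 81 ≤ A := by linarith
    have h2 : 1 / (81 * Real.exp 2) * w = Real.exp (-2) * (w / 81) := by
      rw [Real.exp_neg]; ring
    rw [h2]
    exact mul_le_mul_of_nonneg_left (le_trans (by linarith) hAα)
      (le_of_lt (Real.exp_pos _))
  calc 1 / (81 * Real.exp 2) * w ≤ Real.exp (-2) * (A / α ^ 2) := key
    _ ≤ Real.exp (1 / α - 1 / y) * (A / α ^ 2) := by
        apply mul_le_mul_of_nonneg_right hexp (by positivity)
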